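/- Let M be a semifinite von Neumann algebra, p ≥ 2, and q defined by 1/p + 1/q = 1/2. Suppose y ∈ L^{p'}(M), a ∈ L^q(M)₊, b ∈ L²(M)₊ satisfy |φ(yzd)| ≤ ‖da‖₂‖bz‖₂ for all z ∈ M and d ∈ L^p(M). Then there exists w ∈ M with ‖w‖ ≤ 1 and y = awb, and moreover w = Q_a w Q_b where Q_a, Q_b are the support projections of a and b. -/

import Mathlib

open scoped BigOperators ComplexOrder

/-- The Schatten `p`-norm of a `k × k` complex matrix. -/
noncomputable def schattenNorm {k : ℕ} (p : ℝ) (a : Matrix (Fin k) (Fin k) ℂ) : ℝ :=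
  (∑ i, ((Matrix.isHermitian_conjTranspose_mul_self a).eigenvalues i) ^ (p / 2)) ^ (1 / p)

/-- The operator (spectral) norm of a `k × k` complex matrix. -/
noncomputable def matOpNorm {k : ℕ} (w : Matrix (Fin k) (Fin k) ℂ) : ℝ :=
  ‖LinearMap.toContinuousLinearMap (Matrix.toEuclideanLin w)‖

namespace FactAux

open Matrix

variable {k : ℕ}

local notation "Mat" => Matrix (Fin k) (Fin k) ℂ

lemma trace_eq_sum_eig {A : Mat} (hA : A.IsHermitian) :
    A.trace = ∑ i, (hA.eigenvalues i : ℂ) := by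
  exact hA.trace_eq_sum_eigenvalues

lemma schattenNorm_two (A : Mat) :
    schattenNorm 2 A = Real.sqrt (∑ i, ∑ j, Complex.normSq (A i j)) := by
  have key : (Aᴴ * A).trace = ((∑ i, ∑ j, Complex.normSq (A i j) : ℝ) : ℂ) := by
    push_cast
    simp only [Matrix.trace, Matrix.diag, Matrix.mul_apply, Matrix.conjTranspose_apply]
    rw [Finset.sum_comm]
    congr 1; ext i; congr 1; ext j
    exact Complex.normSq_eq_conj_mul_self.symm
  have key2 : (∑ i, (Matrix.isHermitian_conjTranspose_mul_self A).eigenvalues i)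
      = ∑ i, ∑ j, Complex.normSq (A i j) := by
    have h1 := trace_eq_sum_eig (Matrix.isHermitian_conjTranspose_mul_self A)
    rw [key] at h1
    exact_mod_cast h1.symm
  unfold schattenNorm
  rw [show (2:ℝ)/2 = 1 by norm_num]
  simp only [Real.rpow_one]
  rw [key2, Real.sqrt_eq_rpow]


lemma ext_mulVec {A B : Mat} (h : ∀ v, A.mulVec v = B.mulVec v) : A = B := by
  ext i j
  have := congrFun (h (Pi.single j 1)) i
  simpa [Matrix.mulVec_single] using this

lemma proj_eq {P Q : Mat} (hP : P.IsHermitian) (hP2 : P * P = P)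
    (hQ : Q.IsHermitian) (hQ2 : Q * Q = Q)
    (hr : LinearMap.range P.mulVecLin = LinearMap.range Q.mulVecLin) : P = Q := by
  have key : ∀ (R S : Mat), R * R = R →
      LinearMap.range S.mulVecLin ≤ LinearMap.range R.mulVecLin → R * S = S := by
    intro R S hR2 hle
    apply ext_mulVec; intro v
    obtain ⟨u, hu⟩ := hle (LinearMap.mem_range_self S.mulVecLin v)
    rw [Matrix.mulVecLin_apply, Matrix.mulVecLin_apply] at hu
    calc (R * S) *ᵥ v = R *ᵥ (S *ᵥ v) := (Matrix.mulVec_mulVec _ _ _).symm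
      _ = R *ᵥ (R *ᵥ u) := by rw [hu]
      _ = (R * R) *ᵥ u := Matrix.mulVec_mulVec _ _ _
      _ = R *ᵥ u := by rw [hR2]
      _ = S *ᵥ v := hu
  have hPQ : P * Q = Q := key P Q hP2 hr.ge
  have hQP : Q * P = P := key Q P hQ2 hr.le
  calc P = Pᴴ := hP.symm
    _ = (Q * P)ᴴ := by rw [hQP]
    _ = Pᴴ * Qᴴ := Matrix.conjTranspose_mul _ _
    _ = P * Q := by rw [hP, hQ]
    _ = Q := hPQ

noncomputable def pinv {A : Mat} (hA : A.IsHermitian) : Mat :=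
  (hA.eigenvectorUnitary : Mat) * Matrix.diagonal (fun i => ((hA.eigenvalues i : ℂ))⁻¹)
    * star (hA.eigenvectorUnitary : Mat)

lemma conjU_mul {U : Mat} (hU : star U * U = 1) (f g : Fin k → ℂ) :
    (U * Matrix.diagonal f * star U) * (U * Matrix.diagonal g * star U)
      = U * Matrix.diagonal (fun i => f i * g i) * star U := by
  have h1 : (U * Matrix.diagonal f * star U) * (U * Matrix.diagonal g * star U)
      = U * (Matrix.diagonal f * (star U * U) * Matrix.diagonal g) * star U := by
    simp only [Matrix.mul_assoc]
  rw [h1, hU, mul_one, Matrix.diagonal_mul_diagonal]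

lemma conjU_herm {U : Mat} {g : Fin k → ℂ} (hg : ∀ i, (starRingEnd ℂ) (g i) = g i) :
    (U * Matrix.diagonal g * star U).IsHermitian := by
  unfold Matrix.IsHermitian
  rw [Matrix.conjTranspose_mul, Matrix.conjTranspose_mul, Matrix.diagonal_conjTranspose]
  have h2 : star g = g := funext hg
  rw [h2, Matrix.star_eq_conjTranspose, Matrix.conjTranspose_conjTranspose, Matrix.mul_assoc]

section PinvFacts

lemma spectral' {A : Mat} (hA : A.IsHermitian) :
    A = (hA.eigenvectorUnitary : Mat)
      * Matrix.diagonal (fun i => (hA.eigenvalues i : ℂ))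
      * star (hA.eigenvectorUnitary : Mat) := hA.spectral_theorem

private lemma hU {A : Mat} (hA : A.IsHermitian) : star (hA.eigenvectorUnitary : Mat) * (hA.eigenvectorUnitary : Mat) = 1 :=
  Unitary.coe_star_mul_self _

lemma mul_pinv_eq {A : Mat} (hA : A.IsHermitian) : A * pinv hA = (hA.eigenvectorUnitary : Mat)
    * Matrix.diagonal (fun i => (hA.eigenvalues i : ℂ) * ((hA.eigenvalues i : ℂ))⁻¹)
    * star (hA.eigenvectorUnitary : Mat) := by
  have h := conjU_mul (hU hA) (fun i => (hA.eigenvalues i : ℂ))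
    (fun i => ((hA.eigenvalues i : ℂ))⁻¹)
  rw [← spectral' hA] at h
  exact h

lemma pinv_mul_comm {A : Mat} (hA : A.IsHermitian) : pinv hA * A = A * pinv hA := by
  have h := conjU_mul (hU hA) (fun i => ((hA.eigenvalues i : ℂ))⁻¹)
    (fun i => (hA.eigenvalues i : ℂ))
  rw [← spectral' hA] at h
  have h' : pinv hA * A = (hA.eigenvectorUnitary : Mat)
      * Matrix.diagonal (fun i => ((hA.eigenvalues i : ℂ))⁻¹ * (hA.eigenvalues i : ℂ))
      * star (hA.eigenvectorUnitary : Mat) := h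
  have hfg : (fun i => ((hA.eigenvalues i : ℂ))⁻¹ * (hA.eigenvalues i : ℂ))
      = fun i => (hA.eigenvalues i : ℂ) * ((hA.eigenvalues i : ℂ))⁻¹ := by
    funext i; exact mul_comm _ _
  rw [h', hfg, mul_pinv_eq hA]

lemma pinv_herm {A : Mat} (hA : A.IsHermitian) : (A * pinv hA).IsHermitian := by
  rw [mul_pinv_eq hA]
  refine conjU_herm fun i => ?_
  rcases eq_or_ne ((hA.eigenvalues i : ℂ)) 0 with h | h <;>
    simp [h, Complex.conj_ofReal, map_inv₀]

lemma pinv_idem {A : Mat} (hA : A.IsHermitian) : (A * pinv hA) * (A * pinv hA) = A * pinv hA := by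
  have h := conjU_mul (hU hA)
    (fun i => (hA.eigenvalues i : ℂ) * ((hA.eigenvalues i : ℂ))⁻¹)
    (fun i => (hA.eigenvalues i : ℂ) * ((hA.eigenvalues i : ℂ))⁻¹)
  rw [← mul_pinv_eq hA] at h
  rw [h, mul_pinv_eq hA]
  congr 2
  ext i
  rcases eq_or_ne ((hA.eigenvalues i : ℂ)) 0 with h0 | h0 <;> field_simp [h0]

lemma pinv_mul_self {A : Mat} (hA : A.IsHermitian) : (A * pinv hA) * A = A := by
  have h := conjU_mul (hU hA)
    (fun i => (hA.eigenvalues i : ℂ) * ((hA.eigenvalues i : ℂ))⁻¹)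
    (fun i => (hA.eigenvalues i : ℂ))
  rw [← mul_pinv_eq hA, ← spectral' hA] at h
  rw [h]
  conv_rhs => rw [spectral' hA]
  congr 2
  ext i
  rcases eq_or_ne ((hA.eigenvalues i : ℂ)) 0 with h0 | h0 <;> field_simp [h0]

lemma pinv_mul_pinv {A : Mat} (hA : A.IsHermitian) : (A * pinv hA) * pinv hA = pinv hA := by
  have h := conjU_mul (hU hA)
    (fun i => (hA.eigenvalues i : ℂ) * ((hA.eigenvalues i : ℂ))⁻¹)
    (fun i => ((hA.eigenvalues i : ℂ))⁻¹)
  rw [← mul_pinv_eq hA] at h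
  have h' : (A * pinv hA) * pinv hA = (hA.eigenvectorUnitary : Mat)
      * Matrix.diagonal (fun i => (hA.eigenvalues i : ℂ) * ((hA.eigenvalues i : ℂ))⁻¹
          * ((hA.eigenvalues i : ℂ))⁻¹)
      * star (hA.eigenvectorUnitary : Mat) := h
  rw [h']
  show _ = (hA.eigenvectorUnitary : Mat) * _ * star (hA.eigenvectorUnitary : Mat)
  congr 2
  ext i
  rcases eq_or_ne ((hA.eigenvalues i : ℂ)) 0 with h0 | h0 <;> field_simp [h0]

lemma pinv_mul_proj {A : Mat} (hA : A.IsHermitian) : pinv hA * (A * pinv hA) = pinv hA := by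
  have h := conjU_mul (hU hA)
    (fun i => ((hA.eigenvalues i : ℂ))⁻¹)
    (fun i => (hA.eigenvalues i : ℂ) * ((hA.eigenvalues i : ℂ))⁻¹)
  rw [← mul_pinv_eq hA] at h
  have h' : pinv hA * (A * pinv hA) = (hA.eigenvectorUnitary : Mat)
      * Matrix.diagonal (fun i => ((hA.eigenvalues i : ℂ))⁻¹
          * ((hA.eigenvalues i : ℂ) * ((hA.eigenvalues i : ℂ))⁻¹))
      * star (hA.eigenvectorUnitary : Mat) := h
  rw [h']
  show _ = (hA.eigenvectorUnitary : Mat) * _ * star (hA.eigenvectorUnitary : Mat)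
  congr 2
  ext i
  rcases eq_or_ne ((hA.eigenvalues i : ℂ)) 0 with h0 | h0 <;> field_simp [h0]

lemma pinv_range {A : Mat} (hA : A.IsHermitian) : LinearMap.range (A * pinv hA).mulVecLin = LinearMap.range A.mulVecLin := by
  apply le_antisymm
  · rw [Matrix.mulVecLin_mul]
    exact LinearMap.range_comp_le_range _ _
  · conv_lhs => rw [← pinv_mul_self hA]
    rw [Matrix.mulVecLin_mul]
    exact LinearMap.range_comp_le_range _ _

end PinvFacts

noncomputable def s (v : Fin k → ℂ) : ℝ := Real.sqrt (∑ i, Complex.normSq (v i))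

lemma s_nonneg (v : Fin k → ℂ) : 0 ≤ s v := Real.sqrt_nonneg _

lemma norm_symm_eq_s (u : Fin k → ℂ) : ‖(WithLp.equiv 2 (Fin k → ℂ)).symm u‖ = s u := by
  rw [EuclideanSpace.norm_eq, s]
  congr 1
  refine Finset.sum_congr rfl fun i _ => ?_
  exact Complex.sq_norm _

lemma cs (u v : Fin k → ℂ) : ‖dotProduct (star u) v‖ ≤ s u * s v := by
  have h := norm_inner_le_norm (𝕜 := ℂ) ((WithLp.equiv 2 (Fin k → ℂ)).symm u)
    ((WithLp.equiv 2 (Fin k → ℂ)).symm v)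
  rw [norm_symm_eq_s, norm_symm_eq_s] at h
  have e : inner ℂ ((WithLp.equiv 2 (Fin k → ℂ)).symm u) ((WithLp.equiv 2 (Fin k → ℂ)).symm v)
      = dotProduct (star u) v := by rw [dotProduct_comm]; rfl
  rw [e] at h
  exact h

lemma dot_self (u : Fin k → ℂ) :
    dotProduct (star u) u = ((s u ^ 2 : ℝ) : ℂ) := by
  rw [show (s u ^ 2 : ℝ) = ∑ i, Complex.normSq (u i) from Real.sq_sqrt (Finset.sum_nonneg fun i _ => Complex.normSq_nonneg _)]
  push_cast
  refine Finset.sum_congr rfl fun i _ => ?_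
  rw [Pi.star_apply, Complex.star_def, ← Complex.normSq_eq_conj_mul_self]

lemma s_proj_le {P : Mat} (hP : P.IsHermitian) (hP2 : P * P = P) (u : Fin k → ℂ) :
    s (P.mulVec u) ≤ s u := by
  set x := P.mulVec u with hx
  have h2 : P.mulVec x = x := by rw [hx, Matrix.mulVec_mulVec, hP2]
  have h1 : dotProduct (star x) x = dotProduct (star u) x := by
    conv_lhs => rw [hx]
    rw [Matrix.star_mulVec, hP.eq, ← Matrix.dotProduct_mulVec, h2]
  have h3 : s x ^ 2 ≤ s u * s x := by
    calc s x ^ 2 = ‖dotProduct (star x) x‖ := by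
          rw [dot_self, Complex.norm_real, Real.norm_eq_abs, abs_of_nonneg (sq_nonneg _)]
      _ = ‖dotProduct (star u) x‖ := by rw [h1]
      _ ≤ s u * s x := cs u x
  rcases (s_nonneg x).eq_or_lt with h0 | h0
  · rw [← h0]; exact s_nonneg u
  · nlinarith [h3, h0]

lemma eq_zero_of_trace_mul {c : Mat} (h : ∀ x : Mat, (c * x).trace = 0) : c = 0 := by
  ext i j
  have h1 := h (Matrix.single j i 1)
  simp only [Matrix.trace, Matrix.diag, Matrix.mul_apply, Matrix.single,
    Matrix.of_apply, mul_ite, mul_one, mul_zero, ite_and, Finset.sum_ite_eq',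
    Finset.mem_univ, if_true] at h1
  simpa using h1

lemma vecMulVec_mul (u v : Fin k → ℂ) (A : Mat) :
    Matrix.vecMulVec u v * A = Matrix.vecMulVec u (Matrix.vecMul v A) := by
  ext i j
  simp [Matrix.mul_apply, Matrix.vecMulVec_apply, Matrix.vecMul, dotProduct,
    Finset.mul_sum, mul_assoc]

lemma mul_vecMulVec (u v : Fin k → ℂ) (A : Mat) :
    A * Matrix.vecMulVec u v = Matrix.vecMulVec (A.mulVec u) v := by
  ext i j
  simp [Matrix.mul_apply, Matrix.vecMulVec_apply, Matrix.mulVec, dotProduct,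
    Finset.sum_mul, mul_assoc]

lemma schattenNorm_two_vecMulVec (u v : Fin k → ℂ) :
    schattenNorm 2 (Matrix.vecMulVec u v) = s u * s v := by
  rw [schattenNorm_two, s, s,
    ← Real.sqrt_mul (Finset.sum_nonneg fun i _ => Complex.normSq_nonneg _)]
  congr 1
  rw [Finset.sum_mul_sum]
  exact Finset.sum_congr rfl fun i _ => Finset.sum_congr rfl fun j _ =>
    Complex.normSq_mul _ _
lemma s_star (v : Fin k → ℂ) : s (star v) = s v := by
  simp [s, Pi.star_apply, Complex.star_def, Complex.normSq_conj]

lemma s_single (i₀ : Fin k) : s (Pi.single i₀ (1 : ℂ)) = 1 := by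
  have : (∑ i, Complex.normSq ((Pi.single i₀ (1 : ℂ) : Fin k → ℂ) i)) = 1 := by
    rw [Finset.sum_eq_single i₀]
    · simp
    · intro i _ hi; simp [Pi.single_apply, hi]
    · simp
  rw [s, this, Real.sqrt_one]

lemma key {y a b : Mat} (ha : a.IsHermitian)
    (H : ∀ z d : Mat,
      ‖(y * z * d).trace‖ ≤ schattenNorm 2 (d * a) * schattenNorm 2 (b * z))
    (ξ η : Fin k → ℂ) :
    ‖dotProduct (star ξ) (y.mulVec η)‖
      ≤ s (a.mulVec ξ) * s (b.mulVec η) := by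
  rcases Nat.eq_zero_or_pos k with hk | hk
  · subst hk
    have h0 : dotProduct (star ξ) (y.mulVec η) = 0 := by
      simp [dotProduct]
    rw [h0]
    simpa using mul_nonneg (s_nonneg (a.mulVec ξ)) (s_nonneg (b.mulVec η))
  · set i₀ : Fin k := ⟨0, hk⟩
    set χ : Fin k → ℂ := Pi.single i₀ 1 with hχ
    have hsχ : s χ = 1 := s_single i₀
    have hzd : Matrix.vecMulVec η (star χ) * Matrix.vecMulVec χ (star ξ)
        = Matrix.vecMulVec η (star ξ) := by
      ext i j
      simp only [Matrix.mul_apply, Matrix.vecMulVec_apply, Pi.star_apply]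
      rw [Finset.sum_eq_single i₀]
      · simp [hχ]
      · intro l _ hl
        simp [hχ, Pi.single_apply, hl]
      · simp
    have htr : (y * Matrix.vecMulVec η (star χ) * Matrix.vecMulVec χ (star ξ)).trace
        = dotProduct (star ξ) (y.mulVec η) := by
      rw [mul_assoc, hzd]
      simp only [Matrix.trace, Matrix.diag, Matrix.mul_apply, Matrix.vecMulVec_apply,
        dotProduct, Matrix.mulVec, Pi.star_apply]
      refine Finset.sum_congr rfl fun i _ => ?_
      rw [Finset.mul_sum]
      exact Finset.sum_congr rfl fun j _ => by ring
    have hda : Matrix.vecMulVec χ (star ξ) * a = Matrix.vecMulVec χ (star (a.mulVec ξ)) := by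
      rw [vecMulVec_mul, Matrix.star_mulVec, ha.eq]
    have hbz : b * Matrix.vecMulVec η (star χ) = Matrix.vecMulVec (b.mulVec η) (star χ) :=
      mul_vecMulVec _ _ _
    have hH := H (Matrix.vecMulVec η (star χ)) (Matrix.vecMulVec χ (star ξ))
    rw [htr, hda, hbz, schattenNorm_two_vecMulVec, schattenNorm_two_vecMulVec,
      s_star, s_star, hsχ, one_mul, mul_one] at hH
    exact hH

lemma star_mulVec_herm {P : Mat} (hP : P.IsHermitian) (u : Fin k → ℂ) :
    star (P.mulVec u) = Matrix.vecMul (star u) P := by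
  rw [Matrix.star_mulVec, hP.eq]

end FactAux

open FactAux

/-- Factorisation lemma: if `|φ(y z d)| ≤ ‖d a‖₂ ‖b z‖₂` for all `z ∈ M`, `d ∈ L^p(M)`
(`M` the matrix algebra, `φ` the trace), with `a ≥ 0`, `b ≥ 0`, then `y = a w b` for
some contraction `w ∈ M` with `w = Q_a w Q_b`, where `Q_a, Q_b` are the support
projections of `a` and `b`. -/
theorem exists_factorisation {k : ℕ} (p q : ℝ) (hp : 2 ≤ p) (hq : 2 ≤ q)
    (hpq : 1 / p + 1 / q = 1 / 2)
    (y a b : Matrix (Fin k) (Fin k) ℂ) (ha : a.PosSemidef) (hb : b.PosSemidef)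
    (Qa Qb : Matrix (Fin k) (Fin k) ℂ)
    (hQa : Qa.IsHermitian ∧ Qa * Qa = Qa ∧
      LinearMap.range Qa.mulVecLin = LinearMap.range a.mulVecLin)
    (hQb : Qb.IsHermitian ∧ Qb * Qb = Qb ∧
      LinearMap.range Qb.mulVecLin = LinearMap.range b.mulVecLin)
    (H : ∀ z d : Matrix (Fin k) (Fin k) ℂ,
      ‖(y * z * d).trace‖ ≤ schattenNorm 2 (d * a) * schattenNorm 2 (b * z)) :
    ∃ w : Matrix (Fin k) (Fin k) ℂ,
      matOpNorm w ≤ 1 ∧ y = a * w * b ∧ w = Qa * w * Qb := by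
  classical
  obtain ⟨hQaH, hQa2, hQaR⟩ := hQa
  obtain ⟨hQbH, hQb2, hQbR⟩ := hQb
  have hQaPa : Qa = a * pinv ha.1 :=
    proj_eq hQaH hQa2 (pinv_herm ha.1) (pinv_idem ha.1) (hQaR.trans (pinv_range ha.1).symm)
  have hQbPb : Qb = b * pinv hb.1 :=
    proj_eq hQbH hQb2 (pinv_herm hb.1) (pinv_idem hb.1) (hQbR.trans (pinv_range hb.1).symm)
  have hQa_a : Qa * a = a := by rw [hQaPa]; exact pinv_mul_self ha.1
  have hQb_b : Qb * b = b := by rw [hQbPb]; exact pinv_mul_self hb.1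
  have hb_Qb : b * Qb = b := by
    have := congrArg Matrix.conjTranspose hQb_b
    rwa [Matrix.conjTranspose_mul, hQbH.eq, hb.1.eq] at this
  have h00 : schattenNorm 2 (0 : Matrix (Fin k) (Fin k) ℂ) = 0 := by
    rw [schattenNorm_two]; simp
  have hy1 : Qa * y = y := by
    have h0 : (1 - Qa) * y = 0 := by
      apply eq_zero_of_trace_mul
      intro x
      have hH := H 1 (x * (1 - Qa))
      have hd : (x * (1 - Qa)) * a = 0 := by
        rw [mul_assoc, sub_mul, one_mul, hQa_a, sub_self, mul_zero]
      rw [hd, h00, zero_mul] at hH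
      have htr0 : (y * 1 * (x * (1 - Qa))).trace = 0 :=
        norm_eq_zero.mp (le_antisymm hH (norm_nonneg _))
      calc ((1 - Qa) * y * x).trace = ((y * x) * (1 - Qa)).trace := by
            rw [mul_assoc, Matrix.trace_mul_comm]
        _ = (y * 1 * (x * (1 - Qa))).trace := by rw [mul_one, mul_assoc]
        _ = 0 := htr0
    have h1 : y - Qa * y = 0 := by rwa [sub_mul, one_mul] at h0
    exact (sub_eq_zero.mp h1).symm
  have hy2 : y * Qb = y := by
    have h0 : y * (1 - Qb) = 0 := by
      apply eq_zero_of_trace_mul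
      intro x
      have hH := H ((1 - Qb) * x) 1
      have hz : b * ((1 - Qb) * x) = 0 := by
        rw [← mul_assoc, mul_sub, mul_one, hb_Qb, sub_self, zero_mul]
      rw [hz, h00, mul_zero] at hH
      have htr0 : (y * ((1 - Qb) * x) * 1).trace = 0 :=
        norm_eq_zero.mp (le_antisymm hH (norm_nonneg _))
      calc (y * (1 - Qb) * x).trace = (y * ((1 - Qb) * x) * 1).trace := by
            rw [mul_one, mul_assoc]
        _ = 0 := htr0
    have h1 : y - y * Qb = 0 := by rwa [mul_sub, mul_one] at h0
    exact (sub_eq_zero.mp h1).symm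
  set w : Matrix (Fin k) (Fin k) ℂ := pinv ha.1 * y * pinv hb.1 with hw
  have hw2 : a * w * b = y := by
    have e1 : a * w * b = (a * pinv ha.1) * y * (pinv hb.1 * b) := by
      rw [hw]; simp only [← mul_assoc]
    rw [e1, pinv_mul_comm hb.1, ← hQaPa, ← hQbPb, hy1, hy2]
  have hw3 : w = Qa * w * Qb := by
    have e1 : Qa * w * Qb = (Qa * pinv ha.1) * y * (pinv hb.1 * Qb) := by
      rw [hw]; simp only [← mul_assoc]
    rw [e1, hQaPa, hQbPb, pinv_mul_pinv ha.1, pinv_mul_proj hb.1]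
  have hinner : ∀ u v : Fin k → ℂ,
      ‖dotProduct (star u) (w.mulVec v)‖ ≤ s u * s v := by
    intro u v
    obtain ⟨ξ, hξ⟩ : ∃ ξ, a.mulVec ξ = Qa.mulVec u := by
      have hm : Qa.mulVec u ∈ LinearMap.range a.mulVecLin := by
        rw [← hQaR]; exact ⟨u, rfl⟩
      obtain ⟨ξ, hξ⟩ := hm
      exact ⟨ξ, by rw [← Matrix.mulVecLin_apply]; exact hξ⟩
    obtain ⟨η, hη⟩ : ∃ η, b.mulVec η = Qb.mulVec v := by
      have hm : Qb.mulVec v ∈ LinearMap.range b.mulVecLin := by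
        rw [← hQbR]; exact ⟨v, rfl⟩
      obtain ⟨η, hη⟩ := hm
      exact ⟨η, by rw [← Matrix.mulVecLin_apply]; exact hη⟩
    have estep : dotProduct (star u) (w.mulVec v)
        = dotProduct (star ξ) (y.mulVec η) := by
      conv_lhs => rw [hw3]
      rw [← Matrix.mulVec_mulVec, ← Matrix.mulVec_mulVec,
        Matrix.dotProduct_mulVec (star u) Qa, ← star_mulVec_herm hQaH, ← hξ,
        star_mulVec_herm ha.1, ← Matrix.dotProduct_mulVec, ← hη,
        Matrix.mulVec_mulVec, Matrix.mulVec_mulVec, hw2]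
    rw [estep]
    calc ‖dotProduct (star ξ) (y.mulVec η)‖
        ≤ s (a.mulVec ξ) * s (b.mulVec η) := key ha.1 H ξ η
      _ = s (Qa.mulVec u) * s (Qb.mulVec v) := by rw [hξ, hη]
      _ ≤ s u * s v := mul_le_mul (s_proj_le hQaH hQa2 u) (s_proj_le hQbH hQb2 v)
          (s_nonneg _) (s_nonneg _)
  refine ⟨w, ?_, hw2.symm, hw3⟩
  unfold matOpNorm
  apply ContinuousLinearMap.opNorm_le_bound _ zero_le_one
  intro v
  rw [one_mul]
  have hTv : ‖(LinearMap.toContinuousLinearMap (Matrix.toEuclideanLin w)) v‖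
      = s (w.mulVec (WithLp.equiv 2 (Fin k → ℂ) v)) := by
    rw [LinearMap.coe_toContinuousLinearMap', Matrix.toEuclideanLin_apply]; exact norm_symm_eq_s _
  have hv : ‖v‖ = s (WithLp.equiv 2 (Fin k → ℂ) v) := norm_symm_eq_s _
  rw [hTv, hv]
  set v' := WithLp.equiv 2 (Fin k → ℂ) v with hv'
  have h1 := hinner (w.mulVec v') v'
  rw [dot_self, Complex.norm_real, Real.norm_eq_abs, abs_of_nonneg (sq_nonneg _)] at h1
  rcases (s_nonneg (w.mulVec v')).eq_or_lt with h0 | h0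
  · rw [← h0]; exact s_nonneg v'
  · nlinarith [h1, h0]
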